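/- Under the standing assumptions, for every θ ∈ ℝ^d, every 0 < λ < 1 and every ε_h ∈ (0,1/2], the derivative of the tamed coefficient satisfies the operator-norm bound ‖∇h_λ(θ)‖ ≤ L₀ λ^{−ε_h}, where L₀ := 2a + 4K_H + (l+1)(2K_h + a). -/

import Mathlib

open Real

set_option maxHeartbeats 1000000 in
set_option synthInstance.maxHeartbeats 1000000 in
lemma kTULA_aux_scalar (l : ℕ) (hl : 1 ≤ l) (a K_H K_h lam eps p r nH nV : ℝ)
    (ha : 0 < a) (hK_H : 0 < K_H) (hK_h : 0 < K_h)
    (hlam0 : 0 < lam) (hlam1 : lam < 1) (heps0 : 0 < eps)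
    (hp2 : 2 ≤ p) (hepsp : eps * p = (l:ℝ) + 1)
    (hr0 : 0 ≤ r) (hnH0 : 0 ≤ nH) (hnV0 : 0 ≤ nV)
    (hnH : nH ≤ K_H * (1 + r ^ l))
    (hnV : nV ≤ K_h * (1 + r ^ (l + 1)) + a * r) :
    a + (1 + lam * r ^ p) ^ (-eps) * (nH + a)
      + ((l:ℝ) + 1) * ((1 + lam * r ^ p) ^ (-eps - 1) * (lam * (r ^ (p - 2) * r)) * nV)
    ≤ (2 * a + 4 * K_H + ((l:ℝ) + 1) * (2 * K_h + a)) * lam ^ (-eps) := by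
  have hlcast : (0:ℝ) ≤ (l:ℝ) := Nat.cast_nonneg l
  set A : ℝ := 1 + lam * r ^ p with hA_def
  have hrp : (0:ℝ) ≤ r ^ p := Real.rpow_nonneg hr0 p
  have hA1 : 1 ≤ A := by
    rw [hA_def]; nlinarith
  have hA0 : 0 < A := lt_of_lt_of_le one_pos hA1
  have hrp2 : 0 ≤ r ^ (p - 2) := Real.rpow_nonneg hr0 _
  have hρ1 : 1 ≤ lam ^ (-eps) :=
    Real.one_le_rpow_of_pos_of_le_one_of_nonpos hlam0 hlam1.le (by linarith)
  have hρ0 : 0 < lam ^ (-eps) := Real.rpow_pos_of_pos hlam0 _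
  have hc1 : A ^ (-eps) ≤ 1 := Real.rpow_le_one_of_one_le_of_nonpos hA1 (by linarith)
  have hAe1 : A ^ (-eps - 1) ≤ 1 := Real.rpow_le_one_of_one_le_of_nonpos hA1 (by linarith)
  have hAe0 : 0 < A ^ (-eps) := Real.rpow_pos_of_pos hA0 _
  have hAe10 : 0 < A ^ (-eps - 1) := Real.rpow_pos_of_pos hA0 _
  have hlam_rp : lam * r ^ p ≤ A := by rw [hA_def]; linarith
  rcases le_or_gt r 1 with hrle | hrgt
  · -- case r ≤ 1
    have hrp2le : r ^ (p - 2) ≤ 1 := Real.rpow_le_one hr0 hrle (by linarith)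
    have hrl : r ^ l ≤ 1 := pow_le_one₀ hr0 hrle
    have hrl1 : r ^ (l + 1) ≤ 1 := pow_le_one₀ hr0 hrle
    have ht2 : A ^ (-eps) * (nH + a) ≤ 2 * K_H + a := by
      have h1 : nH + a ≤ 2 * K_H + a := by
        have := mul_le_mul_of_nonneg_left hrl hK_H.le
        linarith
      calc A ^ (-eps) * (nH + a) ≤ 1 * (2 * K_H + a) :=
            mul_le_mul hc1 h1 (by linarith) one_pos.le
        _ = 2 * K_H + a := one_mul _
    have ht3 : ((l:ℝ) + 1) * (A ^ (-eps - 1) * (lam * (r ^ (p - 2) * r)) * nV)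
        ≤ ((l:ℝ) + 1) * (2 * K_h + a) := by
      have hV1 : nV ≤ 2 * K_h + a := by
        have h1 := mul_le_mul_of_nonneg_left hrl1 hK_h.le
        have h2 := mul_le_mul_of_nonneg_left hrle ha.le
        linarith
      have h5 : r ^ (p - 2) * r ≤ 1 := mul_le_one₀ hrp2le hr0 hrle
      have h6 : lam * (r ^ (p - 2) * r) ≤ 1 :=
        mul_le_one₀ hlam1.le (mul_nonneg hrp2 hr0) h5
      have hin : A ^ (-eps - 1) * (lam * (r ^ (p - 2) * r)) ≤ 1 := by
        calc A ^ (-eps - 1) * (lam * (r ^ (p - 2) * r)) ≤ 1 * 1 :=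
              mul_le_mul hAe1 h6 (mul_nonneg hlam0.le (mul_nonneg hrp2 hr0)) one_pos.le
          _ = 1 := one_mul _
      calc ((l:ℝ) + 1) * (A ^ (-eps - 1) * (lam * (r ^ (p - 2) * r)) * nV)
          ≤ ((l:ℝ) + 1) * (1 * (2 * K_h + a)) := by
            refine mul_le_mul_of_nonneg_left ?_ (by linarith)
            exact mul_le_mul hin hV1 hnV0 one_pos.le
        _ = ((l:ℝ) + 1) * (2 * K_h + a) := by ring
    have hC0 : 0 ≤ 2 * a + 4 * K_H + ((l:ℝ) + 1) * (2 * K_h + a) := by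
      have h1 : (0:ℝ) ≤ ((l:ℝ) + 1) * (2 * K_h + a) :=
        mul_nonneg (by linarith) (by linarith)
      linarith
    have hCρ : 2 * a + 4 * K_H + ((l:ℝ) + 1) * (2 * K_h + a)
        ≤ (2 * a + 4 * K_H + ((l:ℝ) + 1) * (2 * K_h + a)) * lam ^ (-eps) :=
      le_mul_of_one_le_right hC0 hρ1
    linarith
  · -- case 1 < r
    have hr1 : 1 ≤ r := hrgt.le
    have hrpos : 0 < r := lt_trans one_pos hrgt
    have hcinv : A ^ (-eps) = (A ^ eps)⁻¹ := Real.rpow_neg hA0.le eps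
    have hAes : A ^ (-eps - 1) = (A ^ eps * A)⁻¹ := by
      rw [show -eps - 1 = -(eps + 1) by ring, Real.rpow_neg hA0.le, Real.rpow_add hA0,
        Real.rpow_one]
    have hρw : lam ^ (-eps) = (lam ^ eps)⁻¹ := Real.rpow_neg hlam0.le eps
    have hs0 : 0 < A ^ eps := Real.rpow_pos_of_pos hA0 _
    have hw0 : 0 < lam ^ eps := Real.rpow_pos_of_pos hlam0 _
    have hG : lam ^ eps * r ^ (l + 1) ≤ A ^ eps := by
      have h2 : (lam * r ^ p) ^ eps ≤ A ^ eps :=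
        Real.rpow_le_rpow (mul_nonneg hlam0.le hrp) hlam_rp heps0.le
      have h3 : (lam * r ^ p) ^ eps = lam ^ eps * r ^ (l + 1) := by
        rw [Real.mul_rpow hlam0.le hrp, ← Real.rpow_natCast r (l + 1), ← Real.rpow_mul hr0]
        congr 2
        push_cast
        nlinarith [hepsp]
      rw [h3] at h2
      exact h2
    have hrl1 : (1:ℝ) ≤ r ^ (l + 1) := one_le_pow₀ hr1
    have hrll : r ^ l ≤ r ^ (l + 1) := pow_le_pow_right₀ hr1 (Nat.le_succ l)
    have hrle' : r ≤ r ^ (l + 1) := by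
      calc r = r ^ 1 := (pow_one r).symm
        _ ≤ r ^ (l + 1) := pow_le_pow_right₀ hr1 (by omega)
    have ht2 : A ^ (-eps) * (nH + a) ≤ (2 * K_H + a) * lam ^ (-eps) := by
      have hHa : nH + a ≤ (2 * K_H + a) * r ^ (l + 1) := by
        have h1 := mul_le_mul_of_nonneg_left hrl1 hK_H.le
        have h2 := mul_le_mul_of_nonneg_left hrll hK_H.le
        have h3 := mul_le_mul_of_nonneg_left hrl1 ha.le
        nlinarith
      have hsinv : (A ^ eps)⁻¹ ≤ (lam ^ eps * r ^ (l + 1))⁻¹ :=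
        inv_anti₀ (by positivity) hG
      calc A ^ (-eps) * (nH + a) = (A ^ eps)⁻¹ * (nH + a) := by rw [hcinv]
        _ ≤ (lam ^ eps * r ^ (l + 1))⁻¹ * ((2 * K_H + a) * r ^ (l + 1)) :=
            mul_le_mul hsinv hHa (by linarith) (by positivity)
        _ = (2 * K_H + a) * (lam ^ eps)⁻¹ := by
            field_simp
        _ = (2 * K_H + a) * lam ^ (-eps) := by rw [hρw]
    have ht3 : ((l:ℝ) + 1) * (A ^ (-eps - 1) * (lam * (r ^ (p - 2) * r)) * nV)
        ≤ ((l:ℝ) + 1) * (2 * K_h + a) * lam ^ (-eps) := by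
      have hVr : nV ≤ (2 * K_h + a) * r ^ (l + 1) := by
        have h1 := mul_le_mul_of_nonneg_left hrl1 hK_h.le
        have h2 := mul_le_mul_of_nonneg_left hrle' ha.le
        nlinarith
      have hr2e : r ^ (2:ℝ) = r * r := by
        rw [show (2:ℝ) = ((2:ℕ):ℝ) by norm_num, Real.rpow_natCast]
        ring
      have e : r ^ (p - 2) * r * r = r ^ p := by
        calc r ^ (p - 2) * r * r = r ^ (p - 2) * r ^ (2:ℝ) := by rw [hr2e]; ring
          _ = r ^ p := by rw [← Real.rpow_add hrpos]; norm_num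
      have hrr : lam * (r ^ (p - 2) * r) * r ≤ A := by
        calc lam * (r ^ (p - 2) * r) * r = lam * r ^ p := by rw [← e]; ring
          _ ≤ A := hlam_rp
      have h7 : lam * (r ^ (p - 2) * r) ≤ A / r := (le_div_iff₀ hrpos).mpr hrr
      have h8 : A ^ (-eps - 1) * (lam * (r ^ (p - 2) * r)) * nV
          ≤ (A ^ eps * A)⁻¹ * (A / r) * ((2 * K_h + a) * r ^ (l + 1)) := by
        rw [hAes]
        refine mul_le_mul (mul_le_mul le_rfl h7
          (mul_nonneg hlam0.le (mul_nonneg hrp2 hr0))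
          (inv_nonneg.2 (mul_nonneg hs0.le hA0.le))) hVr hnV0 ?_
        exact mul_nonneg (inv_nonneg.2 (mul_nonneg hs0.le hA0.le)) (div_nonneg hA0.le hr0)
      have h9 : (A ^ eps * A)⁻¹ * (A / r) * ((2 * K_h + a) * r ^ (l + 1))
          = (2 * K_h + a) * (r ^ l / A ^ eps) := by
        rw [pow_succ]
        field_simp
      have h10 : r ^ l / A ^ eps ≤ (lam ^ eps)⁻¹ := by
        have h11 : lam ^ eps * r ^ l ≤ A ^ eps := by
          have := mul_le_mul_of_nonneg_left hrll hw0.le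
          linarith
        rw [div_le_iff₀ hs0]
        calc (r:ℝ) ^ l = (lam ^ eps)⁻¹ * (lam ^ eps * r ^ l) := by field_simp
          _ ≤ (lam ^ eps)⁻¹ * A ^ eps := mul_le_mul_of_nonneg_left h11 (inv_nonneg.2 hw0.le)
      calc ((l:ℝ) + 1) * (A ^ (-eps - 1) * (lam * (r ^ (p - 2) * r)) * nV)
          ≤ ((l:ℝ) + 1) * ((2 * K_h + a) * (r ^ l / A ^ eps)) := by
            refine mul_le_mul_of_nonneg_left ?_ (by linarith)
            rw [← h9]; exact h8
        _ ≤ ((l:ℝ) + 1) * ((2 * K_h + a) * (lam ^ eps)⁻¹) := by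
            refine mul_le_mul_of_nonneg_left ?_ (by linarith)
            exact mul_le_mul_of_nonneg_left h10 (by linarith)
        _ = ((l:ℝ) + 1) * (2 * K_h + a) * lam ^ (-eps) := by rw [hρw]; ring
    have ha1 : a ≤ a * lam ^ (-eps) := le_mul_of_one_le_right ha.le hρ1
    have h12 : 0 ≤ 2 * K_H * lam ^ (-eps) :=
      mul_nonneg (by linarith) hρ0.le
    nlinarith [ht2, ht3, ha1, h12]

set_option maxHeartbeats 1000000 in
set_option synthInstance.maxHeartbeats 1000000 in
theorem kTULA_tamed_deriv_bound
    {d : ℕ} (hd : 0 < d)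
    (u : EuclideanSpace ℝ (Fin d) → ℝ) (hu : ContDiff ℝ 3 u)
    (h : EuclideanSpace ℝ (Fin d) → EuclideanSpace ℝ (Fin d))
    (H : EuclideanSpace ℝ (Fin d) →
      EuclideanSpace ℝ (Fin d) →L[ℝ] EuclideanSpace ℝ (Fin d))
    (hgrad : ∀ θ, h θ = gradient u θ)
    (hHess : ∀ θ, H θ = fderiv ℝ (gradient u) θ)
    (L K_H K_h a b : ℝ)
    (hL : 0 < L) (hK_H : 0 < K_H) (hK_h : 0 < K_h) (ha : 0 < a) (hb : 0 < b)
    (l : ℕ) (hl : 1 ≤ l)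
    (hH_lip : ∀ θ θ' : EuclideanSpace ℝ (Fin d),
      ‖H θ - H θ'‖ ≤ L * (1 + ‖θ‖ + ‖θ'‖) ^ (l - 1) * ‖θ - θ'‖)
    (hH_bd : ∀ θ : EuclideanSpace ℝ (Fin d), ‖H θ‖ ≤ K_H * (1 + ‖θ‖ ^ l))
    (hh_bd : ∀ θ : EuclideanSpace ℝ (Fin d), ‖h θ‖ ≤ K_h * (1 + ‖θ‖ ^ (l + 1)))
    (hdiss : ∀ θ : EuclideanSpace ℝ (Fin d), a * ‖θ‖ ^ 2 - b ≤ (inner ℝ (h θ) θ : ℝ))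
    (hlam : ℝ → ℝ → EuclideanSpace ℝ (Fin d) → EuclideanSpace ℝ (Fin d))
    (hlam_def : ∀ (lam eps : ℝ) (θ : EuclideanSpace ℝ (Fin d)),
      hlam lam eps θ =
        a • θ + ((1 + lam * ‖θ‖ ^ (((l : ℝ) + 1) / eps)) ^ eps)⁻¹ • (h θ - a • θ)) :
    ∀ (θ : EuclideanSpace ℝ (Fin d)) (lam eps : ℝ),
      0 < lam → lam < 1 → 0 < eps → eps ≤ 1 / 2 →
      ‖fderiv ℝ (hlam lam eps) θ‖ ≤
        (2 * a + 4 * K_H + ((l : ℝ) + 1) * (2 * K_h + a)) * lam ^ (-eps) := by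
  intro θ lam eps hlam0 hlam1 heps0 heps12
  set p : ℝ := ((l : ℝ) + 1) / eps with hp_def
  have hl1 : (2:ℝ) ≤ (l:ℝ) + 1 := by
    have : (1:ℝ) ≤ (l:ℝ) := by exact_mod_cast hl
    linarith
  have hq1 : 1 ≤ p / 2 := by
    rw [hp_def, div_div, le_div_iff₀ (by linarith : (0:ℝ) < eps * 2)]
    linarith
  have hp2 : 2 ≤ p := by linarith
  have hp0 : 0 < p := by linarith
  have hepsp : eps * p = (l:ℝ) + 1 := by
    rw [hp_def]; field_simp
  have hsq : ∀ x : EuclideanSpace ℝ (Fin d), ((‖x‖^2 : ℝ)) ^ (p/2) = ‖x‖ ^ p := by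
    intro x
    rw [← Real.rpow_natCast ‖x‖ 2, ← Real.rpow_mul (norm_nonneg x)]
    congr 1
    push_cast
    ring
  have hsq' : ((‖θ‖^2 : ℝ)) ^ (p/2 - 1) = ‖θ‖ ^ (p - 2) := by
    rw [← Real.rpow_natCast ‖θ‖ 2, ← Real.rpow_mul (norm_nonneg θ)]
    congr 1
    push_cast
    ring
  have hApos : ∀ x : EuclideanSpace ℝ (Fin d), 0 < 1 + lam * ‖x‖ ^ p := by
    intro x
    have h1 : (0:ℝ) ≤ ‖x‖ ^ p := Real.rpow_nonneg (norm_nonneg x) p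
    nlinarith
  have hfun : hlam lam eps = fun x => a • x +
      ((1 + lam * ‖x‖ ^ p) ^ (-eps)) • (h x - a • x) := by
    funext x
    rw [hlam_def lam eps x, ← hp_def, Real.rpow_neg (hApos x).le]
  have hgradfun : h = gradient u := funext hgrad
  have hfd2 : ContDiff ℝ 2 (fderiv ℝ u) := hu.fderiv_right (by norm_num)
  have hdg : DifferentiableAt ℝ (gradient u) θ := by
    have heq : gradient u = fun x =>
        (InnerProductSpace.toDual ℝ (EuclideanSpace ℝ (Fin d))).symm (fderiv ℝ u x) := rfl
    rw [heq]
    exact (InnerProductSpace.toDual ℝ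
      (EuclideanSpace ℝ (Fin d))).symm.toContinuousLinearEquiv.differentiableAt.comp θ
      ((hfd2.differentiable (by norm_num)) θ)
  have hh' : HasFDerivAt h (H θ) θ := by
    rw [hgradfun, hHess θ]
    exact hdg.hasFDerivAt
  set r : ℝ := ‖θ‖ with hr_def
  have hr0 : 0 ≤ r := norm_nonneg θ
  set A : ℝ := 1 + lam * r ^ p with hA_def
  have hA1 : 1 ≤ A := by
    have h1 : (0:ℝ) ≤ r ^ p := Real.rpow_nonneg hr0 p
    rw [hA_def]; nlinarith
  have hA0 : 0 < A := lt_of_lt_of_le one_pos hA1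
  have hφ : HasFDerivAt (fun x : EuclideanSpace ℝ (Fin d) => ((‖x‖^2:ℝ)) ^ (p/2))
      ((p/2 * ((r^2:ℝ)) ^ (p/2 - 1)) • ((2:ℕ) • innerSL ℝ θ)) θ :=
    (hasStrictFDerivAt_norm_sq θ).hasFDerivAt.rpow_const (Or.inr hq1)
  have hA' : HasFDerivAt (fun x : EuclideanSpace ℝ (Fin d) => 1 + lam * ‖x‖ ^ p)
      (lam • ((p/2 * ((r^2:ℝ)) ^ (p/2 - 1)) • ((2:ℕ) • innerSL ℝ θ))) θ := by
    have := (hφ.const_mul lam).const_add 1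
    simpa only [hsq] using this
  have hψ : HasFDerivAt (fun x : EuclideanSpace ℝ (Fin d) => (1 + lam * ‖x‖ ^ p) ^ (-eps))
      ((-eps * A ^ (-eps - 1)) • (lam • ((p/2 * ((r^2:ℝ)) ^ (p/2 - 1)) • ((2:ℕ) • innerSL ℝ θ)))) θ :=
    hA'.rpow_const (Or.inl (ne_of_gt hA0))
  have hf2 : HasFDerivAt (fun x : EuclideanSpace ℝ (Fin d) => h x - a • x)
      (H θ - a • ContinuousLinearMap.id ℝ (EuclideanSpace ℝ (Fin d))) θ :=
    hh'.sub ((hasFDerivAt_id θ).const_smul a)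
  have hmain : HasFDerivAt (hlam lam eps)
      (a • ContinuousLinearMap.id ℝ (EuclideanSpace ℝ (Fin d)) +
        (A ^ (-eps) • (H θ - a • ContinuousLinearMap.id ℝ (EuclideanSpace ℝ (Fin d))) +
          ContinuousLinearMap.smulRight
            ((-eps * A ^ (-eps - 1)) • (lam • ((p/2 * ((r^2:ℝ)) ^ (p/2 - 1)) • ((2:ℕ) • innerSL ℝ θ))))
            (h θ - a • θ))) θ := by
    rw [hfun]
    exact ((hasFDerivAt_id θ).const_smul a).add (hψ.smul hf2)
  rw [hmain.fderiv]
  have hAe0 : 0 < A ^ (-eps) := Real.rpow_pos_of_pos hA0 _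
  have hAe10 : 0 < A ^ (-eps - 1) := Real.rpow_pos_of_pos hA0 _
  have hrp2 : 0 ≤ r ^ (p - 2) := Real.rpow_nonneg hr0 _
  have hV0 : 0 ≤ ‖h θ - a • θ‖ := norm_nonneg _
  have hX : ‖a • ContinuousLinearMap.id ℝ (EuclideanSpace ℝ (Fin d))‖ ≤ a := by
    refine (ContinuousLinearMap.opNorm_smul_le a _).trans ?_
    rw [Real.norm_eq_abs, abs_of_pos ha]
    nlinarith [ContinuousLinearMap.norm_id_le (E := EuclideanSpace ℝ (Fin d)) (𝕜 := ℝ),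
      norm_nonneg (ContinuousLinearMap.id ℝ (EuclideanSpace ℝ (Fin d)))]
  have hY : ‖A ^ (-eps) • (H θ - a • ContinuousLinearMap.id ℝ (EuclideanSpace ℝ (Fin d)))‖
      ≤ A ^ (-eps) * (‖H θ‖ + a) := by
    refine (ContinuousLinearMap.opNorm_smul_le _ _).trans ?_
    rw [Real.norm_eq_abs, abs_of_pos hAe0]
    refine mul_le_mul_of_nonneg_left ?_ hAe0.le
    refine (norm_sub_le _ _).trans ?_
    linarith [hX]
  have h2s : ‖(2:ℕ) • innerSL ℝ θ‖ ≤ 2 * r := by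
    refine (norm_nsmul_le : ‖(2:ℕ) • innerSL ℝ θ‖ ≤ _).trans ?_
    rw [innerSL_apply_norm]
    norm_num
    exact hr_def.symm.le
  have hZc : ‖(-eps * A ^ (-eps - 1)) • (lam • ((p/2 * ((r^2:ℝ)) ^ (p/2 - 1)) • ((2:ℕ) • innerSL ℝ θ)))‖
      ≤ eps * A ^ (-eps - 1) * lam * (p * r ^ (p-2) * r) := by
    have c3 : ‖(p/2 * ((r^2:ℝ)) ^ (p/2 - 1)) • ((2:ℕ) • innerSL ℝ θ)‖
        ≤ p/2 * r^(p-2) * (2*r) := by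
      refine (ContinuousLinearMap.opNorm_smul_le _ _).trans ?_
      rw [Real.norm_eq_abs, hsq', abs_of_nonneg (mul_nonneg (by linarith) hrp2)]
      exact mul_le_mul_of_nonneg_left h2s (mul_nonneg (by linarith) hrp2)
    have c2 : ‖lam • ((p/2 * ((r^2:ℝ)) ^ (p/2 - 1)) • ((2:ℕ) • innerSL ℝ θ))‖
        ≤ lam * (p/2 * r^(p-2) * (2*r)) := by
      refine (ContinuousLinearMap.opNorm_smul_le _ _).trans ?_
      rw [Real.norm_eq_abs, abs_of_pos hlam0]
      exact mul_le_mul_of_nonneg_left c3 hlam0.le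
    refine (ContinuousLinearMap.opNorm_smul_le _ _).trans ?_
    rw [Real.norm_eq_abs, abs_mul, abs_neg, abs_of_pos heps0, abs_of_pos hAe10]
    calc eps * A^(-eps-1) * ‖lam • ((p/2 * ((r^2:ℝ)) ^ (p/2 - 1)) • ((2:ℕ) • innerSL ℝ θ))‖
        ≤ eps * A^(-eps-1) * (lam * (p/2 * r^(p-2) * (2*r))) :=
          mul_le_mul_of_nonneg_left c2 (mul_nonneg heps0.le hAe10.le)
      _ = eps * A^(-eps-1) * lam * (p * r^(p-2) * r) := by ring
  have hZ : ‖ContinuousLinearMap.smulRight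
        ((-eps * A ^ (-eps - 1)) • (lam • ((p/2 * ((r^2:ℝ)) ^ (p/2 - 1)) • ((2:ℕ) • innerSL ℝ θ))))
        (h θ - a • θ)‖
      ≤ eps * A ^ (-eps-1) * lam * (p * r ^ (p-2) * r) * ‖h θ - a • θ‖ := by
    rw [ContinuousLinearMap.norm_smulRight_apply]
    exact mul_le_mul_of_nonneg_right hZc hV0
  have hDb : ‖a • ContinuousLinearMap.id ℝ (EuclideanSpace ℝ (Fin d)) +
        (A ^ (-eps) • (H θ - a • ContinuousLinearMap.id ℝ (EuclideanSpace ℝ (Fin d))) +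
          ContinuousLinearMap.smulRight
            ((-eps * A ^ (-eps - 1)) • (lam • ((p/2 * ((r^2:ℝ)) ^ (p/2 - 1)) • ((2:ℕ) • innerSL ℝ θ))))
            (h θ - a • θ))‖
      ≤ a + A^(-eps) * (‖H θ‖ + a)
        + eps * A^(-eps-1) * lam * (p * r^(p-2) * r) * ‖h θ - a • θ‖ := by
    refine (norm_add_le _ _).trans ?_
    have h1 := norm_add_le
      (A ^ (-eps) • (H θ - a • ContinuousLinearMap.id ℝ (EuclideanSpace ℝ (Fin d))))
      (ContinuousLinearMap.smulRight
        ((-eps * A ^ (-eps - 1)) • (lam • ((p/2 * ((r^2:ℝ)) ^ (p/2 - 1)) • ((2:ℕ) • innerSL ℝ θ))))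
        (h θ - a • θ))
    linarith [hX, hY, hZ]
  refine hDb.trans ?_
  have hT3 : eps * A^(-eps-1) * lam * (p * r^(p-2) * r) * ‖h θ - a • θ‖
      = ((l:ℝ)+1) * (A^(-eps-1) * (lam * (r^(p-2) * r)) * ‖h θ - a • θ‖) := by
    rw [← hepsp]; ring
  rw [hT3]
  have hV : ‖h θ - a • θ‖ ≤ K_h * (1 + r^(l+1)) + a * r := by
    refine (norm_sub_le _ _).trans ?_
    have h1 := hh_bd θ
    refine le_trans (add_le_add h1 (norm_smul_le a θ)) ?_
    rw [Real.norm_eq_abs, abs_of_pos ha]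
  exact kTULA_aux_scalar l hl a K_H K_h lam eps p r ‖H θ‖ ‖h θ - a • θ‖
    ha hK_H hK_h hlam0 hlam1 heps0 hp2 hepsp hr0 (norm_nonneg _) hV0 (hH_bd θ) hV
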